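/- Let ℬ be a doubling ball-basis. Then for any f ∈ L¹_loc(X, 𝕌) and balls A ⊂ B one has ‖f_A − f_B‖_𝕌 ≤ C log(1 + μ(B)/μ(A)) · ⟨f⟩*_{#,A}, where C is an admissible constant, ⟨f⟩_{#,G} = (μ(G)^{−1}∫_G ‖f − f_G‖_𝕌^r)^{1/r}, and ⟨f⟩*_{#,A} = sup_{G ∈ ℬ, G ⊇ A} ⟨f⟩_{#,G}. -/

import Mathlib

open MeasureTheory Set ENNReal NNReal

/-- A ball-basis on a measure space `(X, μ)`: a family of measurable sets of positive
finite measure satisfying conditions B1)-B4) of Karagulyan. -/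
structure BallBasis (X : Type*) [MeasurableSpace X] (μ : Measure X) where
  balls : Set (Set X)
  K : ℝ≥0
  K_pos : 0 < K
  measurableSet : ∀ B ∈ balls, MeasurableSet B
  measure_pos : ∀ B ∈ balls, 0 < μ B
  measure_lt_top : ∀ B ∈ balls, μ B < ∞
  exists_ball : ∀ x y : X, ∃ B ∈ balls, x ∈ B ∧ y ∈ B
  approx : ∀ E : Set X, MeasurableSet E → ∀ ε : ℝ≥0∞, 0 < ε →
      ∃ Bs : ℕ → Set X, (∀ k, Bs k ∈ balls) ∧ μ (symmDiff E (⋃ k, Bs k)) < ε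
  hull : Set X → Set X
  hull_mem : ∀ B ∈ balls, hull B ∈ balls
  star_subset_hull : ∀ B ∈ balls,
      (⋃₀ {A | A ∈ balls ∧ μ A ≤ 2 * μ B ∧ (A ∩ B).Nonempty}) ⊆ hull B
  measure_hull_le : ∀ B ∈ balls, μ (hull B) ≤ (K : ℝ≥0∞) * μ B

namespace BallBasis

variable {X : Type*} [MeasurableSpace X] {μ : Measure X}

/-- `B* = ⋃ {A ∈ ℬ : μ A ≤ 2 μ B, A ∩ B ≠ ∅}`. -/
def star (ℬ : BallBasis X μ) (B : Set X) : Set X :=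
  ⋃₀ {A | A ∈ ℬ.balls ∧ μ A ≤ 2 * μ B ∧ (A ∩ B).Nonempty}

/-- The doubling condition for a ball-basis, with doubling constant `η`. -/
def Doubling (ℬ : BallBasis X μ) (η : ℝ≥0) : Prop :=
  ∀ B ∈ ℬ.balls, ℬ.star B ≠ univ →
    ∃ B' ∈ ℬ.balls, B ⊂ B' ∧ μ B' ≤ (η : ℝ≥0∞) * μ B

end BallBasis

section Sharp

variable {X : Type*} [MeasurableSpace X] {μ : Measure X}
variable {𝕌 : Type*} [NormedAddCommGroup 𝕌] [NormedSpace ℝ 𝕌]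

/-- The average `f_A = μ(A)⁻¹ ∫_A f`. -/
noncomputable def ballAvg (μ : Measure X) (A : Set X) (f : X → 𝕌) : 𝕌 :=
  (μ A).toReal⁻¹ • ∫ x in A, f x ∂μ

/-- The `L^r` mean oscillation `⟨f⟩_{#,B} = (μ(B)⁻¹ ∫_B ‖f - f_B‖^r)^{1/r}`. -/
noncomputable def sharpAvg (μ : Measure X) (r : ℝ) (f : X → 𝕌) (B : Set X) : ℝ≥0∞ :=
  ((∫⁻ x in B, (‖f x - ballAvg μ B f‖₊ : ℝ≥0∞) ^ r ∂μ) / μ B) ^ (1 / r)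

/-- `⟨f⟩*_{#,B} = sup_{A ∈ ℬ, A ⊇ B} ⟨f⟩_{#,A}`. -/
noncomputable def sharpStar {μ : Measure X} (ℬ : BallBasis X μ) (r : ℝ)
    (f : X → 𝕌) (B : Set X) : ℝ≥0∞ :=
  ⨆ A ∈ {A | A ∈ ℬ.balls ∧ B ⊆ A}, sharpAvg μ r f A

/-- The sharp maximal function `𝓜_# f(x) = sup_{B ∋ x} ⟨f⟩_{#,B}`. -/
noncomputable def sharpMax {μ : Measure X} (ℬ : BallBasis X μ) (r : ℝ)
    (f : X → 𝕌) (x : X) : ℝ≥0∞ :=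
  ⨆ B ∈ {B | B ∈ ℬ.balls ∧ x ∈ B}, sharpAvg μ r f B

end Sharp

section AuxProof

variable {X : Type*} [MeasurableSpace X] {μ : Measure X}
variable {𝕌 : Type*} [NormedAddCommGroup 𝕌] [NormedSpace ℝ 𝕌] [CompleteSpace 𝕌]

lemma ennnorm_triangle (a b c : 𝕌) :
    (‖a - c‖₊ : ℝ≥0∞) ≤ (‖a - b‖₊ : ℝ≥0∞) + (‖b - c‖₊ : ℝ≥0∞) := by
  have h : a - c = (a - b) + (b - c) := by abel
  rw [h, ← ENNReal.coe_add]
  exact ENNReal.coe_le_coe.2 (nnnorm_add_le _ _)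

lemma ennnorm_triangle' (a b c : 𝕌) :
    (‖a - c‖₊ : ℝ≥0∞) ≤ (‖a - b‖₊ : ℝ≥0∞) + (‖c - b‖₊ : ℝ≥0∞) := by
  have h : a - c = (a - b) - (c - b) := by abel
  rw [h, ← ENNReal.coe_add]
  exact ENNReal.coe_le_coe.2 (nnnorm_sub_le _ _)

lemma ballAvg_sub_const {f : X → 𝕌} {G : Set X} (c : 𝕌)
    (h0 : μ G ≠ 0) (hfin : μ G ≠ ∞) (hint : IntegrableOn f G μ) :
    ballAvg μ G (fun x => f x - c) = ballAvg μ G f - c := by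
  have htr : (μ G).toReal ≠ 0 := ENNReal.toReal_ne_zero.2 ⟨h0, hfin⟩
  rw [ballAvg, ballAvg,
    integral_sub hint (integrableOn_const hfin),
    setIntegral_const, measureReal_def, smul_sub, smul_smul, inv_mul_cancel₀ htr, one_smul]

lemma ennnorm_ballAvg_sub_ballAvg_le {r : ℝ} (hr : 1 ≤ r) {f : X → 𝕌} {G G' : Set X}
    (hGG' : G ⊆ G') (h0 : μ G ≠ 0) (h0' : μ G' ≠ 0) (hfin' : μ G' ≠ ∞)
    (hint : IntegrableOn f G' μ) :
    (‖ballAvg μ G f - ballAvg μ G' f‖₊ : ℝ≥0∞) ≤ (μ G' / μ G) * sharpAvg μ r f G' := by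
  have hfin : μ G ≠ ∞ := ne_top_of_le_ne_top hfin' (measure_mono hGG')
  set c : 𝕌 := ballAvg μ G' f with hc
  set g : X → 𝕌 := fun x => f x - c with hgdef
  have hintG : IntegrableOn f G μ := hint.mono_set hGG'
  have hg' : IntegrableOn g G' μ := hint.sub (integrableOn_const hfin')
  have havg : ballAvg μ G f - c = ballAvg μ G g := (ballAvg_sub_const c h0 hfin hintG).symm
  set N : ℝ≥0∞ := ∫⁻ x in G', (‖g x‖₊ : ℝ≥0∞) ∂μ with hN
  set I : ℝ≥0∞ := ∫⁻ x in G', (‖g x‖₊ : ℝ≥0∞) ^ r ∂μ with hI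
  have claim1 : (‖ballAvg μ G f - c‖₊ : ℝ≥0∞) ≤ (μ G)⁻¹ * N := by
    have hreal : ‖ballAvg μ G g‖ ≤ (μ G).toReal⁻¹ * ∫ x in G', ‖g x‖ ∂μ := by
      rw [ballAvg, norm_smul, Real.norm_eq_abs,
        abs_of_nonneg (inv_nonneg.2 ENNReal.toReal_nonneg)]
      have h1 : ‖∫ x in G, g x ∂μ‖ ≤ ∫ x in G, ‖g x‖ ∂μ := norm_integral_le_integral_norm _
      have h2 : ∫ x in G, ‖g x‖ ∂μ ≤ ∫ x in G', ‖g x‖ ∂μ :=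
        setIntegral_mono_set hg'.norm (Filter.Eventually.of_forall fun x => norm_nonneg _)
          (HasSubset.Subset.eventuallyLE hGG')
      exact mul_le_mul_of_nonneg_left (h1.trans h2) (inv_nonneg.2 ENNReal.toReal_nonneg)
    calc (‖ballAvg μ G f - c‖₊ : ℝ≥0∞) = ENNReal.ofReal ‖ballAvg μ G g‖ := by
          rw [havg]; exact (ofReal_norm _).symm
      _ ≤ ENNReal.ofReal ((μ G).toReal⁻¹ * ∫ x in G', ‖g x‖ ∂μ) :=
          ENNReal.ofReal_le_ofReal hreal
      _ = ENNReal.ofReal (μ G).toReal⁻¹ * ENNReal.ofReal (∫ x in G', ‖g x‖ ∂μ) :=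
          ENNReal.ofReal_mul (inv_nonneg.2 ENNReal.toReal_nonneg)
      _ = (μ G)⁻¹ * N := by
          rw [ENNReal.ofReal_inv_of_pos (ENNReal.toReal_pos h0 hfin),
            ENNReal.ofReal_toReal hfin]; exact congrArg _ (ofReal_integral_norm_eq_lintegral_enorm hg')
  have claim2 : N ≤ I ^ (1 / r) * (μ G') ^ (1 - 1 / r) := by
    rcases hr.eq_or_lt with heq | hlt
    · have hpow : I ^ (1 / r) * (μ G') ^ (1 - 1 / r) = I := by
        rw [← heq]; norm_num
      rw [hpow, hN, hI, ← heq]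
      simp [ENNReal.rpow_one]
    · have hq : r.HolderConjugate (Real.conjExponent r) := Real.HolderConjugate.conjExponent hlt
      have hmeas : AEMeasurable (fun x => (‖g x‖₊ : ℝ≥0∞)) (μ.restrict G') :=
        hg'.aestronglyMeasurable.enorm
      have hH := ENNReal.lintegral_mul_le_Lp_mul_Lq (μ.restrict G') hq
        (f := fun x => (‖g x‖₊ : ℝ≥0∞)) (g := fun _ => (1 : ℝ≥0∞)) hmeas aemeasurable_const
      simp only [Pi.mul_apply, mul_one, ENNReal.one_rpow, setLIntegral_one] at hH
      have h1q : (1 : ℝ) - 1 / r = 1 / Real.conjExponent r := by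
        rw [one_div, one_div, hq.one_sub_inv]
      rw [hN, hI, h1q]
      exact hH
  have claim3 : I ^ (1 / r) = sharpAvg μ r f G' * (μ G') ^ (1 / r) := by
    have h1r : (0 : ℝ) ≤ 1 / r := by positivity
    have hsharp : sharpAvg μ r f G' = (I / μ G') ^ (1 / r) := rfl
    rw [hsharp, ← ENNReal.mul_rpow_of_nonneg _ _ h1r,
      ENNReal.div_mul_cancel h0' hfin']
  calc (‖ballAvg μ G f - c‖₊ : ℝ≥0∞)
      ≤ (μ G)⁻¹ * N := claim1
    _ ≤ (μ G)⁻¹ * (I ^ (1 / r) * (μ G') ^ (1 - 1 / r)) := mul_le_mul_right claim2 _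
    _ = (μ G)⁻¹ * (sharpAvg μ r f G' * ((μ G') ^ (1 / r) * (μ G') ^ (1 - 1 / r))) := by
        rw [claim3]; ring
    _ = (μ G)⁻¹ * (sharpAvg μ r f G' * μ G') := by
        rw [← ENNReal.rpow_add _ _ h0' hfin', show 1 / r + (1 - 1 / r) = (1 : ℝ) by ring,
          ENNReal.rpow_one]
    _ = (μ G' / μ G) * sharpAvg μ r f G' := by
        rw [ENNReal.div_eq_inv_mul]; ring

lemma sharpAvg_le_sharpStar (ℬ : BallBasis X μ) {r : ℝ} {f : X → 𝕌} {A G : Set X}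
    (hG : G ∈ ℬ.balls) (hAG : A ⊆ G) : sharpAvg μ r f G ≤ sharpStar ℬ r f A :=
  le_biSup _ (show G ∈ {A' | A' ∈ ℬ.balls ∧ A ⊆ A'} from ⟨hG, hAG⟩)

lemma step_bound (ℬ : BallBasis X μ) {r : ℝ} (hr : 1 ≤ r) {f : X → 𝕌}
    {A G G' : Set X} (hG' : G' ∈ ℬ.balls) (hAG' : A ⊆ G') (hGG' : G ⊆ G')
    (h0 : μ G ≠ 0) (hint : IntegrableOn f G' μ) {t : ℝ≥0∞} (ht : μ G' ≤ t * μ G) :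
    (‖ballAvg μ G f - ballAvg μ G' f‖₊ : ℝ≥0∞) ≤ t * sharpStar ℬ r f A := by
  have h := ennnorm_ballAvg_sub_ballAvg_le hr hGG' h0 (ℬ.measure_pos G' hG').ne'
    (ℬ.measure_lt_top G' hG').ne hint
  exact h.trans (mul_le_mul' (ENNReal.div_le_of_le_mul ht) (sharpAvg_le_sharpStar ℬ hG' hAG'))

end AuxProof

section ChainProof

variable {X : Type*} [MeasurableSpace X] {μ : Measure X}
variable {𝕌 : Type*} [NormedAddCommGroup 𝕌] [NormedSpace ℝ 𝕌] [CompleteSpace 𝕌]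

lemma growth_lemma (ℬ : BallBasis X μ) {η : ℝ≥0} (hd : ℬ.Doubling η)
    {G : Set X} (hG : G ∈ ℬ.balls) :
    (univ ∈ ℬ.balls ∧ μ univ ≤ 2 * (ℬ.K : ℝ≥0∞) * μ G) ∨
    ∃ G' ∈ ℬ.balls, G ⊆ G' ∧ 2 * μ G ≤ μ G' ∧
      μ G' ≤ ((ℬ.K + 2 * η : ℝ≥0) : ℝ≥0∞) * μ G := by
  have hGne : G.Nonempty := nonempty_of_measure_ne_zero (ℬ.measure_pos G hG).ne'
  have hmemG : G ∈ {A | A ∈ ℬ.balls ∧ μ A ≤ 2 * μ G ∧ (A ∩ G).Nonempty} :=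
    ⟨hG, le_mul_of_one_le_left zero_le one_le_two, by rwa [inter_self]⟩
  have hGH : G ⊆ ℬ.hull G :=
    (subset_sUnion_of_mem hmemG).trans (ℬ.star_subset_hull G hG)
  have hH : ℬ.hull G ∈ ℬ.balls := ℬ.hull_mem G hG
  have hHle : μ (ℬ.hull G) ≤ (ℬ.K : ℝ≥0∞) * μ G := ℬ.measure_hull_le G hG
  have hKle : (ℬ.K : ℝ≥0∞) ≤ ((ℬ.K + 2 * η : ℝ≥0) : ℝ≥0∞) := by
    rw [ENNReal.coe_le_coe]
    exact le_self_add
  by_cases h2 : 2 * μ G ≤ μ (ℬ.hull G)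
  · exact Or.inr ⟨ℬ.hull G, hH, hGH, h2, hHle.trans (mul_le_mul_left hKle _)⟩
  push_neg at h2
  by_cases hstar : ℬ.star (ℬ.hull G) = univ
  · left
    have huniv : univ ⊆ ℬ.hull (ℬ.hull G) := by
      rw [← hstar]; exact ℬ.star_subset_hull _ hH
    have hequniv : ℬ.hull (ℬ.hull G) = univ := eq_univ_of_univ_subset huniv
    constructor
    · rw [← hequniv]; exact ℬ.hull_mem _ hH
    · rw [← hequniv]
      calc μ (ℬ.hull (ℬ.hull G)) ≤ (ℬ.K : ℝ≥0∞) * μ (ℬ.hull G) := ℬ.measure_hull_le _ hH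
        _ ≤ (ℬ.K : ℝ≥0∞) * (2 * μ G) := mul_le_mul_right h2.le _
        _ = 2 * (ℬ.K : ℝ≥0∞) * μ G := by ring
  · obtain ⟨G', hG'b, hss, hle⟩ := hd _ hH hstar
    refine Or.inr ⟨G', hG'b, hGH.trans hss.subset, ?_, ?_⟩
    · by_contra hcon
      push_neg at hcon
      have hmem : G' ∈ {A | A ∈ ℬ.balls ∧ μ A ≤ 2 * μ G ∧ (A ∩ G).Nonempty} :=
        ⟨hG'b, hcon.le, hGne.mono (subset_inter (hGH.trans hss.subset) subset_rfl)⟩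
      exact hss.not_subset ((subset_sUnion_of_mem hmem).trans (ℬ.star_subset_hull G hG))
    · calc μ G' ≤ (η : ℝ≥0∞) * μ (ℬ.hull G) := hle
        _ ≤ (η : ℝ≥0∞) * (2 * μ G) := mul_le_mul_right h2.le _
        _ ≤ ((ℬ.K + 2 * η : ℝ≥0) : ℝ≥0∞) * μ G := by
            rw [← mul_assoc]
            refine mul_le_mul_left ?_ _
            calc (η : ℝ≥0∞) * 2 = ((2 * η : ℝ≥0) : ℝ≥0∞) := by push_cast; ring
              _ ≤ ((ℬ.K + 2 * η : ℝ≥0) : ℝ≥0∞) := by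
                  rw [ENNReal.coe_le_coe]; exact le_add_self

lemma link_bound (ℬ : BallBasis X μ) {r : ℝ} (hr : 1 ≤ r) {f : X → 𝕌}
    (hf : ∀ G ∈ ℬ.balls, IntegrableOn f G μ) {A B G : Set X}
    (hA : A ∈ ℬ.balls) (hB : B ∈ ℬ.balls) (hAB : A ⊆ B)
    (hG : G ∈ ℬ.balls) (hAG : A ⊆ G) {t : ℝ≥0}
    (hGB : μ G ≤ (t : ℝ≥0∞) * μ B) (h2 : μ B ≤ 2 * μ G) :
    (‖ballAvg μ G f - ballAvg μ B f‖₊ : ℝ≥0∞) ≤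
      ((ℬ.K + ℬ.K * t : ℝ≥0) : ℝ≥0∞) * sharpStar ℬ r f A := by
  set H := ℬ.hull G with hHdef
  have hH : H ∈ ℬ.balls := ℬ.hull_mem G hG
  have hGne : G.Nonempty := nonempty_of_measure_ne_zero (ℬ.measure_pos G hG).ne'
  have hmemG : G ∈ {A | A ∈ ℬ.balls ∧ μ A ≤ 2 * μ G ∧ (A ∩ G).Nonempty} :=
    ⟨hG, le_mul_of_one_le_left zero_le one_le_two, by rwa [inter_self]⟩
  have hGH : G ⊆ H := (subset_sUnion_of_mem hmemG).trans (ℬ.star_subset_hull G hG)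
  have hBGne : (B ∩ G).Nonempty :=
    (nonempty_of_measure_ne_zero (ℬ.measure_pos A hA).ne').mono (subset_inter hAB hAG)
  have hmemB : B ∈ {A | A ∈ ℬ.balls ∧ μ A ≤ 2 * μ G ∧ (A ∩ G).Nonempty} := ⟨hB, h2, hBGne⟩
  have hBH : B ⊆ H := (subset_sUnion_of_mem hmemB).trans (ℬ.star_subset_hull G hG)
  have hHle : μ H ≤ (ℬ.K : ℝ≥0∞) * μ G := ℬ.measure_hull_le G hG
  have s1 : (‖ballAvg μ G f - ballAvg μ H f‖₊ : ℝ≥0∞) ≤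
      (ℬ.K : ℝ≥0∞) * sharpStar ℬ r f A :=
    step_bound ℬ hr hH (hAG.trans hGH) hGH (ℬ.measure_pos G hG).ne' (hf H hH) hHle
  have s2 : (‖ballAvg μ B f - ballAvg μ H f‖₊ : ℝ≥0∞) ≤
      ((ℬ.K : ℝ≥0∞) * t) * sharpStar ℬ r f A := by
    refine step_bound ℬ hr hH (hAB.trans hBH) hBH (ℬ.measure_pos B hB).ne' (hf H hH) ?_
    calc μ H ≤ (ℬ.K : ℝ≥0∞) * μ G := hHle
      _ ≤ (ℬ.K : ℝ≥0∞) * ((t : ℝ≥0∞) * μ B) := mul_le_mul_right hGB _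
      _ = ((ℬ.K : ℝ≥0∞) * t) * μ B := by ring
  calc (‖ballAvg μ G f - ballAvg μ B f‖₊ : ℝ≥0∞)
      ≤ (‖ballAvg μ G f - ballAvg μ H f‖₊ : ℝ≥0∞) +
        (‖ballAvg μ B f - ballAvg μ H f‖₊ : ℝ≥0∞) := ennnorm_triangle' _ _ _
    _ ≤ (ℬ.K : ℝ≥0∞) * sharpStar ℬ r f A + ((ℬ.K : ℝ≥0∞) * t) * sharpStar ℬ r f A :=
        add_le_add s1 s2
    _ = ((ℬ.K + ℬ.K * t : ℝ≥0) : ℝ≥0∞) * sharpStar ℬ r f A := by push_cast; ring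

lemma chain_bound (ℬ : BallBasis X μ) {η : ℝ≥0} (hd : ℬ.Doubling η)
    {r : ℝ} (hr : 1 ≤ r) {f : X → 𝕌} (hf : ∀ G ∈ ℬ.balls, IntegrableOn f G μ)
    {A B : Set X} (hA : A ∈ ℬ.balls) (hB : B ∈ ℬ.balls) (hAB : A ⊆ B) :
    ∀ n : ℕ, ∀ G ∈ ℬ.balls, A ⊆ G →
      μ G ≤ ((ℬ.K + 2 * η : ℝ≥0) : ℝ≥0∞) * μ B → μ B ≤ 2 ^ n * μ G →
      (‖ballAvg μ G f - ballAvg μ B f‖₊ : ℝ≥0∞) ≤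
        (((ℬ.K + ℬ.K * (ℬ.K + 2 * η)) + ((ℬ.K + 2 * η) + 3 * ℬ.K) : ℝ≥0) : ℝ≥0∞) *
          ((n : ℝ≥0∞) + 1) * sharpStar ℬ r f A := by
  set c₁ : ℝ≥0 := ℬ.K + 2 * η with hc₁
  set c₂ : ℝ≥0 := (ℬ.K + ℬ.K * c₁) + (c₁ + 3 * ℬ.K) with hc₂
  have honele : ∀ x : ℝ≥0∞, (1 : ℝ≥0∞) ≤ x + 1 := fun x => by
    calc (1 : ℝ≥0∞) = 0 + 1 := (zero_add 1).symm
      _ ≤ x + 1 := add_le_add_left zero_le 1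
  have hlink : ∀ m : ℕ, ∀ G ∈ ℬ.balls, A ⊆ G → μ G ≤ (c₁ : ℝ≥0∞) * μ B →
      μ B ≤ 2 * μ G →
      (‖ballAvg μ G f - ballAvg μ B f‖₊ : ℝ≥0∞) ≤
        (c₂ : ℝ≥0∞) * ((m : ℝ≥0∞) + 1) * sharpStar ℬ r f A := by
    intro m G hG hAG hinv h2
    have h := link_bound ℬ hr hf hA hB hAB hG hAG hinv h2
    refine h.trans (mul_le_mul_left ?_ _)
    have hle : ((ℬ.K + ℬ.K * c₁ : ℝ≥0) : ℝ≥0∞) ≤ (c₂ : ℝ≥0∞) := by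
      rw [ENNReal.coe_le_coe, hc₂]; exact le_self_add
    calc ((ℬ.K + ℬ.K * c₁ : ℝ≥0) : ℝ≥0∞) ≤ (c₂ : ℝ≥0∞) := hle
      _ = (c₂ : ℝ≥0∞) * 1 := (mul_one _).symm
      _ ≤ (c₂ : ℝ≥0∞) * ((m : ℝ≥0∞) + 1) := mul_le_mul_right (honele _) _
  have hc₁c₂ : (c₁ : ℝ≥0∞) ≤ (c₂ : ℝ≥0∞) := by
    rw [ENNReal.coe_le_coe, hc₂]
    calc c₁ ≤ c₁ + 3 * ℬ.K := le_self_add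
      _ ≤ (ℬ.K + ℬ.K * c₁) + (c₁ + 3 * ℬ.K) := le_add_self
  have h3Kc₂ : ((3 * ℬ.K : ℝ≥0) : ℝ≥0∞) ≤ (c₂ : ℝ≥0∞) := by
    rw [ENNReal.coe_le_coe, hc₂]
    calc 3 * ℬ.K ≤ c₁ + 3 * ℬ.K := le_add_self
      _ ≤ (ℬ.K + ℬ.K * c₁) + (c₁ + 3 * ℬ.K) := le_add_self
  intro n
  induction n with
  | zero =>
    intro G hG hAG hinv hcnt
    rcases le_or_gt (μ B) (2 * μ G) with h2 | h2
    · exact hlink 0 G hG hAG hinv h2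
    · exfalso
      rw [pow_zero, one_mul] at hcnt
      exact absurd hcnt
        (not_le.2 (lt_of_le_of_lt (le_mul_of_one_le_left zero_le one_le_two) h2))
  | succ n ih =>
    intro G hG hAG hinv hcnt
    rcases le_or_gt (μ B) (2 * μ G) with h2 | h2
    · exact hlink (n + 1) G hG hAG hinv h2
    have hGB : μ G ≤ μ B :=
      (le_mul_of_one_le_left zero_le one_le_two).trans h2.le
    rcases growth_lemma ℬ hd hG with ⟨hU, hUle⟩ | ⟨G', hG', hsub, hlow, hup⟩
    · -- terminal case: univ is a ball
      have s1 : (‖ballAvg μ G f - ballAvg μ univ f‖₊ : ℝ≥0∞) ≤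
          (2 * (ℬ.K : ℝ≥0∞)) * sharpStar ℬ r f A :=
        step_bound ℬ hr hU (subset_univ _) (subset_univ _) (ℬ.measure_pos G hG).ne'
          (hf univ hU) hUle
      have s2 : (‖ballAvg μ B f - ballAvg μ univ f‖₊ : ℝ≥0∞) ≤
          (ℬ.K : ℝ≥0∞) * sharpStar ℬ r f A := by
        refine step_bound ℬ hr hU (hAB.trans (subset_univ _)) (subset_univ _)
          (ℬ.measure_pos B hB).ne' (hf univ hU) ?_
        calc μ univ ≤ 2 * (ℬ.K : ℝ≥0∞) * μ G := hUle
          _ = (ℬ.K : ℝ≥0∞) * (2 * μ G) := by ring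
          _ ≤ (ℬ.K : ℝ≥0∞) * μ B := mul_le_mul_right h2.le _
      calc (‖ballAvg μ G f - ballAvg μ B f‖₊ : ℝ≥0∞)
          ≤ (‖ballAvg μ G f - ballAvg μ univ f‖₊ : ℝ≥0∞) +
            (‖ballAvg μ B f - ballAvg μ univ f‖₊ : ℝ≥0∞) := ennnorm_triangle' _ _ _
        _ ≤ (2 * (ℬ.K : ℝ≥0∞)) * sharpStar ℬ r f A +
            (ℬ.K : ℝ≥0∞) * sharpStar ℬ r f A := add_le_add s1 s2
        _ = ((3 * ℬ.K : ℝ≥0) : ℝ≥0∞) * sharpStar ℬ r f A := by push_cast; ring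
        _ ≤ (c₂ : ℝ≥0∞) * sharpStar ℬ r f A := mul_le_mul_left h3Kc₂ _
        _ = (c₂ : ℝ≥0∞) * 1 * sharpStar ℬ r f A := by rw [mul_one]
        _ ≤ (c₂ : ℝ≥0∞) * (((n : ℕ) + 1 : ℕ) : ℝ≥0∞) * sharpStar ℬ r f A := by
            refine mul_le_mul_left (mul_le_mul_right ?_ _) _
            exact_mod_cast Nat.one_le_iff_ne_zero.2 (Nat.succ_ne_zero n)
        _ ≤ (c₂ : ℝ≥0∞) * ((((n : ℕ) + 1 : ℕ) : ℝ≥0∞) + 1) * sharpStar ℬ r f A := by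
            refine mul_le_mul_left (mul_le_mul_right le_self_add _) _
    · -- chain step
      have s1 : (‖ballAvg μ G f - ballAvg μ G' f‖₊ : ℝ≥0∞) ≤
          (c₁ : ℝ≥0∞) * sharpStar ℬ r f A :=
        step_bound ℬ hr hG' (hAG.trans hsub) hsub (ℬ.measure_pos G hG).ne' (hf G' hG') hup
      have hinv' : μ G' ≤ (c₁ : ℝ≥0∞) * μ B :=
        hup.trans (mul_le_mul_right hGB _)
      have hcnt' : μ B ≤ 2 ^ n * μ G' := by
        calc μ B ≤ 2 ^ (n + 1) * μ G := hcnt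
          _ = 2 ^ n * (2 * μ G) := by rw [pow_succ]; ring
          _ ≤ 2 ^ n * μ G' := mul_le_mul_right hlow _
      have hrec := ih G' hG' (hAG.trans hsub) hinv' hcnt'
      calc (‖ballAvg μ G f - ballAvg μ B f‖₊ : ℝ≥0∞)
          ≤ (‖ballAvg μ G f - ballAvg μ G' f‖₊ : ℝ≥0∞) +
            (‖ballAvg μ G' f - ballAvg μ B f‖₊ : ℝ≥0∞) := ennnorm_triangle _ _ _
        _ ≤ (c₁ : ℝ≥0∞) * sharpStar ℬ r f A +
            (c₂ : ℝ≥0∞) * ((n : ℝ≥0∞) + 1) * sharpStar ℬ r f A := add_le_add s1 hrec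
        _ ≤ (c₂ : ℝ≥0∞) * sharpStar ℬ r f A +
            (c₂ : ℝ≥0∞) * ((n : ℝ≥0∞) + 1) * sharpStar ℬ r f A :=
            add_le_add_left (mul_le_mul_left hc₁c₂ _) _
        _ = (c₂ : ℝ≥0∞) * ((((n : ℕ) + 1 : ℕ) : ℝ≥0∞) + 1) * sharpStar ℬ r f A := by
            push_cast; ring

end ChainProof

/-- For a doubling ball-basis and balls `A ⊆ B`:
`‖f_A - f_B‖ ≤ C log(1 + μ(B)/μ(A)) ⟨f⟩*_{#,A}`. -/
theorem norm_ballAvg_sub_le_log {X : Type*} [MeasurableSpace X] {μ : Measure X}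
    (ℬ : BallBasis X μ) {𝕌 : Type*} [NormedAddCommGroup 𝕌] [NormedSpace ℝ 𝕌]
    [CompleteSpace 𝕌] {η : ℝ≥0} (hη : 1 < η) (hd : ℬ.Doubling η)
    (r : ℝ) (hr : 1 ≤ r) :
    ∃ C : ℝ≥0, 0 < C ∧ ∀ f : X → 𝕌, (∀ G ∈ ℬ.balls, IntegrableOn f G μ) →
      ∀ A ∈ ℬ.balls, ∀ B ∈ ℬ.balls, A ⊆ B →
        (‖ballAvg μ A f - ballAvg μ B f‖₊ : ℝ≥0∞) ≤
          (C : ℝ≥0∞) * ENNReal.ofReal (Real.log (1 + (μ B).toReal / (μ A).toReal)) *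
            sharpStar ℬ r f A := by
  classical
  set c₁ : ℝ≥0 := ℬ.K + 2 * η with hc₁
  set c₂ : ℝ≥0 := (ℬ.K + ℬ.K * c₁) + (c₁ + 3 * ℬ.K) with hc₂
  have hlog2 : (0 : ℝ) < Real.log 2 := Real.log_pos (by norm_num)
  set C : ℝ≥0 := c₂ * Real.toNNReal (3 / Real.log 2) with hC
  have hc₂pos : 0 < c₂ := lt_of_lt_of_le ℬ.K_pos (le_self_add.trans le_self_add)
  have hCpos : 0 < C := mul_pos hc₂pos (Real.toNNReal_pos.2 (by positivity))
  refine ⟨C, hCpos, ?_⟩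
  intro f hf A hA B hB hAB
  have hA0 : μ A ≠ 0 := (ℬ.measure_pos A hA).ne'
  have hAfin : μ A ≠ ∞ := (ℬ.measure_lt_top A hA).ne
  have hB0 : μ B ≠ 0 := (ℬ.measure_pos B hB).ne'
  have hBfin : μ B ≠ ∞ := (ℬ.measure_lt_top B hB).ne
  have ha : 0 < (μ A).toReal := ENNReal.toReal_pos hA0 hAfin
  have hb : 0 < (μ B).toReal := ENNReal.toReal_pos hB0 hBfin
  have hab : (μ A).toReal ≤ (μ B).toReal := ENNReal.toReal_mono hBfin (measure_mono hAB)
  set t : ℝ := (μ B).toReal / (μ A).toReal with htdef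
  have ht1 : (1 : ℝ) ≤ t := (one_le_div ha).2 hab
  set L : ℝ := Real.log (1 + t) with hLdef
  have hL2 : Real.log 2 ≤ L := Real.log_le_log (by norm_num) (by linarith)
  -- find the number of doubling steps
  have hex : ∃ n : ℕ, μ B ≤ 2 ^ n * μ A := by
    obtain ⟨k, hk⟩ := ENNReal.exists_nat_gt (show μ B / μ A ≠ ∞ from
      (ENNReal.div_lt_top hBfin hA0).ne)
    refine ⟨k, ?_⟩
    have h2k : ((k : ℕ) : ℝ≥0∞) ≤ 2 ^ k := by
      calc ((k : ℕ) : ℝ≥0∞) ≤ (((2 ^ k : ℕ) : ℕ) : ℝ≥0∞) :=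
            Nat.cast_le.2 (Nat.lt_two_pow_self (n := k)).le
        _ = 2 ^ k := by push_cast; ring
    have hdiv : μ B / μ A ≤ 2 ^ k := hk.le.trans h2k
    exact (ENNReal.div_le_iff_le_mul (Or.inl hA0) (Or.inl hAfin)).1 hdiv
  obtain ⟨n, hspec, hmin⟩ :
      ∃ n : ℕ, (μ B ≤ 2 ^ n * μ A) ∧ ∀ m < n, ¬ μ B ≤ 2 ^ m * μ A :=
    ⟨Nat.find hex, Nat.find_spec hex, fun m hm => Nat.find_min hex hm⟩
  -- invariant for the chain lemma
  have hinv : μ A ≤ (c₁ : ℝ≥0∞) * μ B := by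
    have h1 : (1 : ℝ≥0∞) ≤ (c₁ : ℝ≥0∞) := by
      rw [show (1 : ℝ≥0∞) = ((1 : ℝ≥0) : ℝ≥0∞) from rfl, ENNReal.coe_le_coe, hc₁]
      rw [← NNReal.coe_le_coe]
      push_cast
      have hK : (0 : ℝ) ≤ (ℬ.K : ℝ) := (ℬ.K : ℝ≥0).coe_nonneg
      have hηR : (1 : ℝ) ≤ (η : ℝ) := by exact_mod_cast hη.le
      nlinarith
    calc μ A ≤ μ B := measure_mono hAB
      _ = 1 * μ B := (one_mul _).symm
      _ ≤ (c₁ : ℝ≥0∞) * μ B := mul_le_mul_left h1 _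
  have hmain := chain_bound ℬ hd hr hf hA hB hAB n A hA subset_rfl hinv hspec
  refine hmain.trans (mul_le_mul_left ?_ _)
  -- now compare the counting factor to the logarithm
  have hkey : ((n : ℝ) + 1) ≤ 3 / Real.log 2 * L := by
    have hdiv3 : (3 : ℝ) / Real.log 2 * Real.log 2 = 3 := div_mul_cancel₀ _ hlog2.ne'
    rcases Nat.eq_zero_or_pos n with h0 | hpos
    · subst h0
      push_cast
      nlinarith [mul_le_mul_of_nonneg_left hL2 (by positivity : (0:ℝ) ≤ 3 / Real.log 2)]
    · obtain ⟨m, rfl⟩ : ∃ m, n = m + 1 := ⟨n - 1, by omega⟩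
      have hlt : 2 ^ m * μ A < μ B := not_le.1 (hmin m (by omega))
      have hltR : (2 : ℝ) ^ m * (μ A).toReal < (μ B).toReal := by
        have hfin2 : (2 : ℝ≥0∞) ^ m * μ A ≠ ∞ :=
          ENNReal.mul_ne_top (ENNReal.pow_ne_top (by norm_num)) hAfin
        have hh := (ENNReal.toReal_lt_toReal hfin2 hBfin).2 hlt
        rwa [ENNReal.toReal_mul, ENNReal.toReal_pow, ENNReal.toReal_ofNat] at hh
      have hlt2 : (2 : ℝ) ^ m < t := (lt_div_iff₀ ha).2 hltR
      have hlog : (m : ℝ) * Real.log 2 < L := by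
        calc (m : ℝ) * Real.log 2 = Real.log ((2 : ℝ) ^ m) := (Real.log_pow 2 m).symm
          _ < Real.log t := Real.log_lt_log (by positivity) hlt2
          _ ≤ L := Real.log_le_log (by linarith) (by linarith)
      rw [div_mul_eq_mul_div, le_div_iff₀ hlog2]
      push_cast
      nlinarith [hlog, hL2]
  calc (c₂ : ℝ≥0∞) * ((n : ℝ≥0∞) + 1)
      = (c₂ : ℝ≥0∞) * ENNReal.ofReal ((n : ℝ) + 1) := by
        rw [ENNReal.ofReal_add (Nat.cast_nonneg n) zero_le_one, ENNReal.ofReal_natCast,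
          ENNReal.ofReal_one]
    _ ≤ (c₂ : ℝ≥0∞) * ENNReal.ofReal (3 / Real.log 2 * L) :=
        mul_le_mul_right (ENNReal.ofReal_le_ofReal hkey) _
    _ = (c₂ : ℝ≥0∞) * (ENNReal.ofReal (3 / Real.log 2) * ENNReal.ofReal L) := by
        rw [ENNReal.ofReal_mul (by positivity)]
    _ = (C : ℝ≥0∞) * ENNReal.ofReal L := by
        rw [hC, ENNReal.coe_mul, mul_assoc]
        rfl
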